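/- Let n be a natural number, let U be a subspace of GF(2)^n, let b = dim(U ∩ U^⊥), and let v_1, …, v_b be a basis of U ∩ U^⊥. Suppose j_1, …, j_b ∈ {1, …, n} are indices such that for each i the j_i-th coordinate of v_i equals 1 and the j_i-th coordinate of v_k equals 0 for all k < i. Then the images of the standard basis vectors e_{j_1}, …, e_{j_b} under the quotient map form a basis of the quotient space GF(2)^n / (U + U^⊥). -/
import Mathlib


/-- The orthogonal complement of a subspace `U ⊆ GF(2)^E` with respect to the
standard bilinear form `⟨u, w⟩ = ∑ e, u e * w e`. -/
def perp {E : Type*} [Fintype E] (U : Submodule (ZMod 2) (E → ZMod 2)) :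
    Submodule (ZMod 2) (E → ZMod 2) where
  carrier := {w | ∀ u ∈ U, ∑ e, u e * w e = 0}
  add_mem' := by
    intro a b ha hb u hu
    simp only [Set.mem_setOf_eq] at ha hb
    simp only [Set.mem_setOf_eq, Pi.add_apply, mul_add, Finset.sum_add_distrib,
      ha u hu, hb u hu, add_zero]
  zero_mem' := by
    intro u hu
    simp
  smul_mem' := by
    intro c a ha u hu
    simp only [Set.mem_setOf_eq] at ha ⊢
    have h : ∑ e, u e * (c • a) e = c * ∑ e, u e * a e := by
      rw [Finset.mul_sum]
      refine Finset.sum_congr rfl fun e _ => ?_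
      simp only [Pi.smul_apply, smul_eq_mul]
      ring
    rw [h, ha u hu, mul_zero]

noncomputable def pairMap (n : ℕ) :
    (Fin n → ZMod 2) →ₗ[ZMod 2] Module.Dual (ZMod 2) (Fin n → ZMod 2) where
  toFun x :=
    { toFun := fun y => ∑ e, y e * x e
      map_add' := by intro a c; simp [add_mul, Finset.sum_add_distrib]
      map_smul' := by intro c a; simp [Finset.mul_sum, smul_eq_mul, mul_assoc] }
  map_add' := by
    intro a c; ext y; simp [mul_add, Finset.sum_add_distrib]
  map_smul' := by
    intro c a; ext y; simp [Finset.mul_sum, smul_eq_mul, mul_left_comm]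

lemma pairMap_inj (n : ℕ) : Function.Injective (pairMap n) := by
  rw [injective_iff_map_eq_zero]
  intro x hx
  funext m
  have := congrArg (fun φ : Module.Dual (ZMod 2) (Fin n → ZMod 2) =>
    φ (Pi.single m (1 : ZMod 2))) hx
  simpa [pairMap, Pi.single_apply, ite_mul, Finset.sum_ite_eq'] using this

lemma finrank_perp (n : ℕ) (U : Submodule (ZMod 2) (Fin n → ZMod 2)) :
    Module.finrank (ZMod 2) (perp U) + Module.finrank (ZMod 2) U = n := by
  classical
  have hsurj : Function.Surjective (pairMap n) := by
    rw [← LinearMap.range_eq_top]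
    apply Submodule.eq_top_of_finrank_eq
    rw [LinearMap.finrank_range_of_inj (pairMap_inj n), Subspace.dual_finrank_eq]
  let e : (Fin n → ZMod 2) ≃ₗ[ZMod 2] Module.Dual (ZMod 2) (Fin n → ZMod 2) :=
    LinearEquiv.ofBijective (pairMap n) ⟨pairMap_inj n, hsurj⟩
  have hperp : perp U = (Submodule.dualAnnihilator U).comap (e : _ →ₗ[ZMod 2] _) := by
    ext x
    simp only [Submodule.mem_comap, Submodule.mem_dualAnnihilator]
    constructor
    · intro hx u hu
      exact hx u hu
    · intro hx u hu
      exact hx u hu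
  have h1 : Module.finrank (ZMod 2) (perp U)
      = Module.finrank (ZMod 2) (Submodule.dualAnnihilator U) := by
    rw [hperp, Submodule.comap_equiv_eq_map_symm]
    exact LinearEquiv.finrank_map_eq e.symm _
  have h2 : Module.finrank (ZMod 2) ((Fin n → ZMod 2) ⧸ U)
      = Module.finrank (ZMod 2) (Submodule.dualAnnihilator U) :=
    (Subspace.quotEquivAnnihilator U).finrank_eq
  have h3 := Submodule.finrank_quotient_add_finrank U
  rw [h1, ← h2, h3]
  simp [Module.finrank_pi]

/-- Let `U ⊆ GF(2)^n`, `b = dim (U ⊓ U^⊥)`, and let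
`v_1, …, v_b` be a basis of the bicycle space `U ⊓ U^⊥`. If `j_1, …, j_b` are
coordinates such that `v_i` has a `1` in coordinate `j_i` while `v_k` has a `0`
there for all `k < i`, then the images of the standard basis vectors
`e_{j_1}, …, e_{j_b}` under the quotient map form a basis of
`GF(2)^n / (U + U^⊥)`. -/
theorem stmt_7 (n : ℕ) (U : Submodule (ZMod 2) (Fin n → ZMod 2))
    (b : ℕ) (hb : b = Module.finrank (ZMod 2) ↥(U ⊓ perp U))
    (v : Fin b → (Fin n → ZMod 2))
    (hmem : ∀ i, v i ∈ U ⊓ perp U)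
    (hind : LinearIndependent (ZMod 2) v)
    (hspan : Submodule.span (ZMod 2) (Set.range v) = U ⊓ perp U)
    (j : Fin b → Fin n)
    (hj1 : ∀ i, v i (j i) = 1)
    (hj0 : ∀ i k, k < i → v k (j i) = 0) :
    LinearIndependent (ZMod 2) (fun i : Fin b =>
      Submodule.Quotient.mk (p := U ⊔ perp U) (Pi.single (j i) (1 : ZMod 2))) ∧
    Submodule.span (ZMod 2) (Set.range fun i : Fin b =>
      Submodule.Quotient.mk (p := U ⊔ perp U) (Pi.single (j i) (1 : ZMod 2)))
      = ⊤ := by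
  classical
  have pairA : ∀ w ∈ U ⊓ perp U, ∀ x ∈ U ⊔ perp U, ∑ e, w e * x e = 0 := by
    intro w hw x hx
    obtain ⟨u, hu, p, hp, rfl⟩ := Submodule.mem_sup.mp hx
    have h1 : ∑ e, w e * u e = 0 := by
      have := hw.2 u hu
      rw [← this]
      exact Finset.sum_congr rfl fun e _ => mul_comm _ _
    have h2 : ∑ e, w e * p e = 0 := hp w hw.1
    simp only [Pi.add_apply, mul_add, Finset.sum_add_distrib, h1, h2, add_zero]
  have hli : LinearIndependent (ZMod 2) (fun i : Fin b =>
      Submodule.Quotient.mk (p := U ⊔ perp U) (Pi.single (j i) (1 : ZMod 2))) := by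
    rw [Fintype.linearIndependent_iff]
    intro g hg
    have hmemq : (∑ i, g i • Pi.single (j i) (1 : ZMod 2)) ∈ U ⊔ perp U := by
      rw [← Submodule.Quotient.mk_eq_zero, ← Submodule.mkQ_apply, map_sum]
      simpa [Submodule.mkQ_apply] using hg
    have key : ∀ k : Fin b, ∑ i, g i * v k (j i) = 0 := by
      intro k
      have h := pairA (v k) (hmem k) _ hmemq
      rw [← h]
      simp only [Finset.sum_apply, Pi.smul_apply, smul_eq_mul, Finset.mul_sum]
      rw [Finset.sum_comm]
      refine Finset.sum_congr rfl fun i _ => ?_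
      simp [Pi.single_apply, mul_ite, ite_mul, Finset.sum_ite_eq', mul_comm]
    have hg0 : ∀ m : ℕ, ∀ k : Fin b, (k : ℕ) = m → g k = 0 := by
      intro m
      induction m using Nat.strong_induction_on with
      | _ m ih =>
        intro k hk
        have hsum : ∑ i, g i * v k (j i) = g k := by
          rw [Finset.sum_eq_single k]
          · rw [hj1 k, mul_one]
          · intro i _ hne
            rcases lt_or_gt_of_ne hne with h | h
            · have hik : (i : ℕ) < (k : ℕ) := h
              rw [ih (i : ℕ) (by omega) i rfl, zero_mul]
            · rw [hj0 i k h, mul_zero]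
          · intro h; exact absurd (Finset.mem_univ k) h
        have hk2 := key k
        rw [hsum] at hk2
        exact hk2
    intro i
    exact hg0 (i : ℕ) i rfl
  refine ⟨hli, ?_⟩
  apply hli.span_eq_top_of_card_eq_finrank'
  have h1 := Submodule.finrank_sup_add_finrank_inf_eq U (perp U)
  have h2 := finrank_perp n U
  have h3 := Submodule.finrank_quotient_add_finrank (U ⊔ perp U)
  have h4 : Module.finrank (ZMod 2) (Fin n → ZMod 2) = n := by
    simp [Module.finrank_pi]
  rw [h4] at h3
  simp only [Fintype.card_fin]
  omega
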